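/- Let A be a commutative normed ring, fix n ≥ 1, and let F = {(a_i)_{i∈ℕⁿ} : a_i ∈ A, ‖a_i‖ → 0 along the cofinite filter} with the supremum norm be the underlying normed A-module of the Tate algebra A⟨T₁,…,Tₙ⟩. Let M be a complete normed A-module whose norm is nonarchimedean, N a normed A-module, ε: M → N a continuous bounded surjective A-linear map which is strict (every norm-bounded family in N is the image under ε of a norm-bounded family in M), and θ: F → N a continuous bounded A-linear map. Then there exists a continuous bounded A-linear map σ: F → M with ε ∘ σ = θ. In other words, A⟨T₁,…,Tₙ⟩ is an analytically projective A-module. -/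

import Mathlib

open ZeroAtInfty Filter Topology


set_option linter.unusedSectionVars false
namespace TateAux

variable {ι : Type*} [TopologicalSpace ι] [DiscreteTopology ι] [DecidableEq ι]
variable {A : Type*} [NormedCommRing A]

/-- The indicator family `δ_i`. -/
noncomputable def single (i : ι) : C₀(ι, A) where
  toFun := Pi.single i 1
  continuous_toFun := continuous_of_discreteTopology
  zero_at_infty' := by
    rw [cocompact_eq_cofinite]
    refine Filter.Tendsto.congr' ?_ tendsto_const_nhds
    filter_upwards [(Set.finite_singleton i).eventually_cofinite_notMem] with x hx
    exact (Pi.single_eq_of_ne (M := fun _ => A) (by simpa using hx) 1).symm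

@[simp] lemma single_apply (i x : ι) :
    (single i : C₀(ι, A)) x = if x = i then 1 else 0 := by
  simp [single, Pi.single_apply]

lemma coe_sum {κ : Type*} (s : Finset κ) (g : κ → C₀(ι, A)) :
    ⇑(∑ k ∈ s, g k) = ∑ k ∈ s, ⇑(g k) := by
  induction s using Finset.cons_induction with
  | empty => simp
  | cons k s hk ih => simp [Finset.sum_cons, ih]

lemma norm_apply_le (f : C₀(ι, A)) (x : ι) : ‖f x‖ ≤ ‖f‖ :=
  f.toBCF.norm_coe_le_norm x

lemma norm_le_of_forall {f : C₀(ι, A)} {C : ℝ} (hC : 0 ≤ C) (h : ∀ x, ‖f x‖ ≤ C) :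
    ‖f‖ ≤ C := by
  rw [← ZeroAtInftyContinuousMap.norm_toBCF_eq_norm]
  exact (BoundedContinuousFunction.norm_le hC).mpr h

lemma hasSum_single_smul (f : C₀(ι, A)) :
    HasSum (fun i : ι => f i • (single i : C₀(ι, A))) f := by
  rw [HasSum, SummationFilter.unconditional_filter, Metric.tendsto_atTop]
  intro δ hδ
  have hf : Tendsto f cofinite (𝓝 0) := by
    have := f.zero_at_infty'; rwa [cocompact_eq_cofinite] at this
  have hfin : {x : ι | ¬ ‖f x‖ < δ / 2}.Finite := by
    have h := hf.eventually (Metric.ball_mem_nhds (0 : A) (half_pos hδ))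
    simpa [Filter.eventually_cofinite, Metric.mem_ball, dist_zero_right] using h
  refine ⟨hfin.toFinset, fun s hs => ?_⟩
  have key : ∀ x : ι, ‖((∑ i ∈ s, f i • (single i : C₀(ι, A))) - f) x‖ ≤ δ / 2 := by
    intro x
    have hx : ((∑ i ∈ s, f i • (single i : C₀(ι, A))) - f) x
        = (if x ∈ s then f x else 0) - f x := by
      rw [ZeroAtInftyContinuousMap.coe_sub]
      simp only [Pi.sub_apply]
      congr 1
      rw [coe_sum]
      simp only [Finset.sum_apply, ZeroAtInftyContinuousMap.coe_smul, Pi.smul_apply,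
        single_apply, smul_eq_mul, mul_ite, mul_one, mul_zero]
      simp only [eq_comm (a := x)]
      exact Finset.sum_ite_eq' s x f
    rw [hx]
    by_cases hxs : x ∈ s
    · simp [hxs, le_of_lt (half_pos hδ)]
    · simp only [hxs, if_false, zero_sub, norm_neg]
      have : x ∉ hfin.toFinset := fun hmem => hxs (hs hmem)
      rw [Set.Finite.mem_toFinset] at this
      simpa using le_of_lt (not_not.mp this)
  have : dist (∑ i ∈ s, f i • (single i : C₀(ι, A))) f ≤ δ / 2 := by
    rw [dist_eq_norm]
    exact norm_le_of_forall (le_of_lt (half_pos hδ)) key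
  exact lt_of_le_of_lt this (half_lt_self hδ)

lemma norm_single_le (i : ι) : ‖(single i : C₀(ι, A))‖ ≤ ‖(1 : A)‖ := by
  refine norm_le_of_forall (norm_nonneg _) fun x => ?_
  by_cases h : x = i <;> simp [h]

end TateAux

/- The underlying normed `A`-module of the Tate algebra `A⟨T₁,…,Tₙ⟩` is the
space of families `(a_i)_{i ∈ ℕⁿ}` of elements of `A` whose norms tend to `0`
along the cofinite filter, equipped with the supremum norm.  Since the index
set `Fin n → ℕ` is discrete, its cocompact filter equals the cofinite filter,
so this module is exactly `C₀(Fin n → ℕ, A)`, the functions vanishing at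
infinity with the supremum norm. -/

/-- Let `A` be a commutative normed ring, `n ≥ 1`, and let
`F = A⟨T₁,…,Tₙ⟩ = C₀(Fin n → ℕ, A)` be the underlying normed `A`-module of the
Tate algebra (families with norms tending to zero along the cofinite filter,
with the sup norm).  Let `M` be a complete normed `A`-module with
nonarchimedean norm, `N` a normed `A`-module, `ε : M → N` a continuous bounded
surjective `A`-linear map which is strict (every norm-bounded family in `N`
lifts to a norm-bounded family in `M`), and `θ : F → N` a continuous bounded
`A`-linear map.  Then there is a continuous bounded `A`-linear map `σ : F → M`
with `ε ∘ σ = θ`: the Tate algebra is an analytically projective `A`-module. -/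
theorem tateAlgebra_analyticallyProjective {A : Type*} [NormedCommRing A]
    (n : ℕ) (hn : 1 ≤ n)
    {M N : Type*} [NormedAddCommGroup M] [Module A M] [IsBoundedSMul A M]
    [CompleteSpace M] [NormedAddCommGroup N] [Module A N] [IsBoundedSMul A N]
    (hnaM : ∀ x y : M, ‖x + y‖ ≤ max ‖x‖ ‖y‖)
    (ε : M →ₗ[A] N) (hεc : Continuous ε)
    (hεb : ∃ C : ℝ, ∀ m : M, ‖ε m‖ ≤ C * ‖m‖)
    (hεs : Function.Surjective ε)
    (hstrict : ∀ (κ : Type) (ν : κ → N), (∃ C : ℝ, ∀ k, ‖ν k‖ ≤ C) →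
      ∃ μ : κ → M, (∀ k, ε (μ k) = ν k) ∧ ∃ C : ℝ, ∀ k, ‖μ k‖ ≤ C)
    (θ : C₀(Fin n → ℕ, A) →ₗ[A] N) (hθc : Continuous θ)
    (hθb : ∃ C : ℝ, ∀ f : C₀(Fin n → ℕ, A), ‖θ f‖ ≤ C * ‖f‖) :
    ∃ σ : C₀(Fin n → ℕ, A) →ₗ[A] M, Continuous σ ∧
      (∃ C : ℝ, ∀ f : C₀(Fin n → ℕ, A), ‖σ f‖ ≤ C * ‖f‖) ∧
      ε ∘ₗ σ = θ := by
  classical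
  set ι := (Fin n → ℕ)
  haveI : IsUltrametricDist M :=
    IsUltrametricDist.isUltrametricDist_of_forall_norm_add_le_max_norm hnaM
  obtain ⟨Cθ, hCθ⟩ := hθb
  -- the images of the standard "basis" vectors
  set ν : ι → N := fun i => θ (TateAux.single i) with hν
  have hνbdd : ∃ C : ℝ, ∀ i, ‖ν i‖ ≤ C := by
    refine ⟨max Cθ 0 * ‖(1 : A)‖, fun i => ?_⟩
    calc ‖ν i‖ ≤ Cθ * ‖(TateAux.single i : C₀(ι, A))‖ := hCθ _
      _ ≤ max Cθ 0 * ‖(TateAux.single i : C₀(ι, A))‖ :=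
          mul_le_mul_of_nonneg_right (le_max_left _ _) (norm_nonneg _)
      _ ≤ max Cθ 0 * ‖(1 : A)‖ :=
          mul_le_mul_of_nonneg_left (TateAux.norm_single_le i) (le_max_right _ _)
  obtain ⟨μ, hεμ, Cμ, hCμ⟩ := hstrict ι ν hνbdd
  set D := max Cμ 0 with hD
  have hD0 : 0 ≤ D := le_max_right _ _
  have hμD : ∀ i, ‖μ i‖ ≤ D := fun i => le_trans (hCμ i) (le_max_left _ _)
  -- summability of the defining series
  have hsumm : ∀ f : C₀(ι, A), Summable (fun i : ι => f i • μ i) := by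
    intro f
    apply NonarchimedeanAddGroup.summable_of_tendsto_cofinite_zero
    have hf : Tendsto f cofinite (𝓝 0) := by
      have := f.zero_at_infty'; rwa [cocompact_eq_cofinite] at this
    have hfn : Tendsto (fun i => ‖f i‖ * D) cofinite (𝓝 0) := by
      simpa using (hf.norm.mul_const D)
    refine squeeze_zero_norm (fun i => ?_) hfn
    calc ‖f i • μ i‖ ≤ ‖f i‖ * ‖μ i‖ := norm_smul_le _ _
      _ ≤ ‖f i‖ * D := mul_le_mul_of_nonneg_left (hμD i) (norm_nonneg _)
  -- the lift
  refine ⟨{ toFun := fun f => ∑' i : ι, f i • μ i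
            map_add' := ?_
            map_smul' := ?_ }, ?_, ?_, ?_⟩
  · intro f g
    rw [← Summable.tsum_add (hsumm f) (hsumm g)]
    exact tsum_congr fun i => by
      simp [ZeroAtInftyContinuousMap.coe_add, add_smul]
  · intro a f
    simp only [RingHom.id_apply]
    rw [← Summable.tsum_const_smul a (hsumm f)]
    exact tsum_congr fun i => by
      simp [ZeroAtInftyContinuousMap.coe_smul, smul_smul]
  · -- continuity via the bound
    have bound : ∀ f : C₀(ι, A), ‖∑' i : ι, f i • μ i‖ ≤ D * ‖f‖ := by
      intro f
      refine IsUltrametricDist.norm_tsum_le_of_forall_le_of_nonneg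
        (mul_nonneg hD0 (norm_nonneg _)) fun i => ?_
      calc ‖f i • μ i‖ ≤ ‖f i‖ * ‖μ i‖ := norm_smul_le _ _
        _ ≤ ‖f‖ * D :=
          mul_le_mul (TateAux.norm_apply_le f i) (hμD i) (norm_nonneg _) (norm_nonneg _)
        _ = D * ‖f‖ := mul_comm _ _
    refine (LipschitzWith.of_dist_le_mul (K := D.toNNReal) fun f g => ?_).continuous
    simp only [LinearMap.coe_mk, AddHom.coe_mk, dist_eq_norm]
    rw [← Summable.tsum_sub (hsumm f) (hsumm g)]
    have : (fun i : ι => f i • μ i - g i • μ i) = fun i : ι => (f - g) i • μ i := by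
      funext i; simp [ZeroAtInftyContinuousMap.coe_sub, sub_smul]
    rw [this, Real.coe_toNNReal D hD0]
    exact bound (f - g)
  · refine ⟨D, fun f => ?_⟩
    simp only [LinearMap.coe_mk, AddHom.coe_mk]
    refine IsUltrametricDist.norm_tsum_le_of_forall_le_of_nonneg
      (mul_nonneg hD0 (norm_nonneg _)) fun i => ?_
    calc ‖f i • μ i‖ ≤ ‖f i‖ * ‖μ i‖ := norm_smul_le _ _
      _ ≤ ‖f‖ * D :=
        mul_le_mul (TateAux.norm_apply_le f i) (hμD i) (norm_nonneg _) (norm_nonneg _)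
      _ = D * ‖f‖ := mul_comm _ _
  · ext f
    simp only [LinearMap.coe_comp, Function.comp_apply, LinearMap.coe_mk, AddHom.coe_mk]
    set E : M →L[A] N := ⟨ε, hεc⟩
    set Θ : C₀(ι, A) →L[A] N := ⟨θ, hθc⟩
    have h1 : ε (∑' i : ι, f i • μ i) = ∑' i : ι, f i • ν i := by
      have := E.map_tsum (hsumm f)
      simp only [ContinuousLinearMap.coe_mk', E] at this
      rw [this]
      exact tsum_congr fun i => by rw [map_smul, hεμ i]
    have h2 : HasSum (fun i : ι => f i • ν i) (θ f) := by
      have := (TateAux.hasSum_single_smul f).mapL Θ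
      simpa only [map_smul, ContinuousLinearMap.coe_mk', Θ, hν] using this
    rw [h1, h2.tsum_eq]
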